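/- arXiv:2412.02175 — 3 statements merged into one kernel-verified Lean document; each statement's English description precedes it below -/
import Mathlib

section
/- For the quadratic loss ℓ(B) = ‖y - Bs‖² on symmetric matrices B ∈ 𝕊^d, with ‖s‖ ≤ D, the gradient satisfies ‖∇ℓ(B)‖_* ≤ 2D √(ℓ(B)), where ‖·‖_* is the nuclear norm and ∇ℓ(B) = -(y - Bs)sᵀ - s(y - Bs)ᵀ. -/
set_option maxHeartbeats 1000000


open Matrix

/-- The Euclidean norm of a vector in `ℝ^d`. -/
noncomputable def euclNorm {d : ℕ} (v : Fin d → ℝ) : ℝ := Real.sqrt (∑ i, v i ^ 2)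

/-- The nuclear norm of a matrix: the sum of its singular values. -/
noncomputable def nuclearNorm {d : ℕ} (M : Matrix (Fin d) (Fin d) ℝ) : ℝ :=
  ∑ i, Real.sqrt ((Matrix.isHermitian_conjTranspose_mul_self M).eigenvalues i)

/- Auxiliary lemmas -/

lemma vmv_mul {d : ℕ} (u v x w : Fin d → ℝ) :
    vecMulVec u v * vecMulVec x w = (∑ i, v i * x i) • vecMulVec u w := by
  ext i j
  simp only [Matrix.mul_apply, vecMulVec_apply, Matrix.smul_apply, smul_eq_mul]
  rw [Finset.sum_mul]
  exact Finset.sum_congr rfl fun k _ => by ring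

lemma trace_vmv {d : ℕ} (u v : Fin d → ℝ) : (vecMulVec u v).trace = ∑ i, u i * v i := by
  simp [Matrix.trace, Matrix.diag, vecMulVec_apply]

lemma conj_mul_conj {d : ℕ} (U : Matrix.unitaryGroup (Fin d) ℝ)
    (X Y : Matrix (Fin d) (Fin d) ℝ) :
    ((U : Matrix (Fin d) (Fin d) ℝ) * X * star (U : Matrix (Fin d) (Fin d) ℝ)) *
      ((U : Matrix (Fin d) (Fin d) ℝ) * Y * star (U : Matrix (Fin d) (Fin d) ℝ)) =
    (U : Matrix (Fin d) (Fin d) ℝ) * (X * Y) * star (U : Matrix (Fin d) (Fin d) ℝ) := by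
  have h1 : star (U : Matrix (Fin d) (Fin d) ℝ) * (U : Matrix (Fin d) (Fin d) ℝ) = 1 :=
    Matrix.UnitaryGroup.star_mul_self U
  simp only [← Matrix.mul_assoc]
  rw [Matrix.mul_assoc ((U : Matrix (Fin d) (Fin d) ℝ) * X)
    (star (U : Matrix (Fin d) (Fin d) ℝ)) (U : Matrix (Fin d) (Fin d) ℝ), h1, Matrix.mul_one]

lemma traceConjAux {d : ℕ} (U : Matrix.unitaryGroup (Fin d) ℝ) (X : Matrix (Fin d) (Fin d) ℝ) :
    ((U : Matrix (Fin d) (Fin d) ℝ) * X * star (U : Matrix (Fin d) (Fin d) ℝ)).trace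
      = X.trace := by
  rw [Matrix.trace_mul_cycle, Matrix.UnitaryGroup.star_mul_self U, Matrix.one_mul]

/-- Lemma 4.4: self-bounding property of the quadratic loss `ℓ(B) = ‖y - Bs‖²`. -/
theorem stmt6 {d : ℕ} (D : ℝ) (y s : Fin d → ℝ) (B : Matrix (Fin d) (Fin d) ℝ)
    (hB : Bᵀ = B) (hs : euclNorm s ≤ D) :
    nuclearNorm (-(Matrix.vecMulVec (y - B.mulVec s) s) - Matrix.vecMulVec s (y - B.mulVec s))
      ≤ 2 * D * Real.sqrt (∑ i, ((y - B.mulVec s) i) ^ 2) := by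
  classical
  set r : Fin d → ℝ := y - B.mulVec s with hr
  set M : Matrix (Fin d) (Fin d) ℝ := -(vecMulVec r s) - vecMulVec s r with hM
  set A : ℝ := ∑ i, r i ^ 2 with hA
  set Bn : ℝ := ∑ i, s i ^ 2 with hBn
  set c : ℝ := ∑ i, r i * s i with hc
  have hrr : (∑ i, r i * r i) = A := by
    rw [hA]; exact Finset.sum_congr rfl fun i _ => (pow_two (r i)).symm
  have hss : (∑ i, s i * s i) = Bn := by
    rw [hBn]; exact Finset.sum_congr rfl fun i _ => (pow_two (s i)).symm
  have hsr : (∑ i, s i * r i) = c := by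
    rw [hc]; exact Finset.sum_congr rfl fun i _ => mul_comm _ _
  have hA0 : 0 ≤ A := Finset.sum_nonneg fun i _ => sq_nonneg _
  have hBn0 : 0 ≤ Bn := Finset.sum_nonneg fun i _ => sq_nonneg _
  have hcs : c ^ 2 ≤ A * Bn := Finset.sum_mul_sq_le_sq_mul_sq Finset.univ r s
  have hD0 : 0 ≤ D := le_trans (Real.sqrt_nonneg _) hs
  have hMsym : Mᵀ = M := by
    ext i j
    simp only [hM, Matrix.transpose_apply, Matrix.sub_apply, Matrix.neg_apply, vecMulVec_apply]
    ring
  have hN := Matrix.isHermitian_conjTranspose_mul_self M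
  set lam : Fin d → ℝ := hN.eigenvalues with hlam
  have hlam0 : ∀ i, 0 ≤ lam i := fun i =>
    Matrix.eigenvalues_conjTranspose_mul_self_nonneg M i
  have hNM : Mᴴ * M = M * M := by
    rw [Matrix.conjTranspose_eq_transpose_of_trivial, hMsym]
  -- matrix-side trace computations
  have hMM : M * M = c • vecMulVec r s + Bn • vecMulVec r r +
      (A • vecMulVec s s + c • vecMulVec s r) := by
    have hPP : M * M = (vecMulVec r s + vecMulVec s r) * (vecMulVec r s + vecMulVec s r) := by
      rw [hM]; noncomm_ring
    rw [hPP, add_mul, mul_add, mul_add, vmv_mul, vmv_mul, vmv_mul, vmv_mul, hsr, hss, hrr, hc]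
  have hTr1 : (Mᴴ * M).trace = 2 * c ^ 2 + 2 * (A * Bn) := by
    rw [hNM, hMM]
    simp only [Matrix.trace_add, Matrix.trace_smul, trace_vmv, smul_eq_mul, hrr, hss, hsr, ← hc]
    ring
  have hTr2 : ((Mᴴ * M) * (Mᴴ * M)).trace
      = 2 * c ^ 4 + 12 * (A * Bn) * c ^ 2 + 2 * (A * Bn) ^ 2 := by
    rw [hNM, hMM]
    simp only [add_mul, mul_add, smul_mul_assoc, mul_smul_comm, vmv_mul, smul_smul,
      Matrix.trace_add, Matrix.trace_smul, trace_vmv, smul_eq_mul, hrr, hss, hsr, ← hc]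
    ring
  -- eigenvalue-side trace identities
  have hsum1 : ∑ i, lam i = (Mᴴ * M).trace := by
    conv_rhs => rw [hN.spectral_theorem]
    rw [Unitary.conjStarAlgAut_apply, traceConjAux]
    simp [Matrix.trace_diagonal, Function.comp, RCLike.ofReal_real_eq_id]
    rfl
  have hsum2 : ∑ i, (lam i) ^ 2 = ((Mᴴ * M) * (Mᴴ * M)).trace := by
    conv_rhs => rw [hN.spectral_theorem]
    rw [Unitary.conjStarAlgAut_apply, conj_mul_conj, traceConjAux, Matrix.diagonal_mul_diagonal]
    simp [Matrix.trace_diagonal, Function.comp, RCLike.ofReal_real_eq_id, pow_two]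
    rfl
  -- support of eigenvalues
  set T : Finset (Fin d) := Finset.univ.filter (fun i => lam i ≠ 0) with hT
  have hTzero : ∀ i ∉ T, lam i = 0 := by
    intro i hi
    by_contra h
    exact hi (Finset.mem_filter.2 ⟨Finset.mem_univ _, h⟩)
  have hTsum : ∑ i, Real.sqrt (lam i) = ∑ i ∈ T, Real.sqrt (lam i) := by
    refine (Finset.sum_filter_of_ne ?_).symm
    intro i _ hne
    intro h0
    exact hne (by rw [h0, Real.sqrt_zero])
  have hT1 : ∑ i ∈ T, lam i = ∑ i, lam i :=
    Finset.sum_subset (Finset.subset_univ T) (fun i _ hi => hTzero i hi)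
  have hT2 : ∑ i ∈ T, (lam i) ^ 2 = ∑ i, (lam i) ^ 2 :=
    Finset.sum_subset (Finset.subset_univ T) (fun i _ hi => by rw [hTzero i hi]; ring)
  -- rank bound : at most two nonzero eigenvalues
  have hTcard : T.card ≤ 2 := by
    have h1 : T.card = Fintype.card {i // lam i ≠ 0} := (Fintype.card_subtype _).symm
    have h2 : (Mᴴ * M).rank = Fintype.card {i // lam i ≠ 0} := hN.rank_eq_card_non_zero_eigs
    have h3 : (Mᴴ * M).rank = M.rank := Matrix.rank_conjTranspose_mul_self M
    have h4 : M.rank ≤ 2 := by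
      set C : Matrix (Fin d) (Fin 2) ℝ :=
        Matrix.of (fun i k => if k = 0 then -(r i) else -(s i)) with hC
      set Rm : Matrix (Fin 2) (Fin d) ℝ :=
        Matrix.of (fun k j => if k = 0 then s j else r j) with hRm
      have hfac : M = C * Rm := by
        ext i j
        simp only [hM, Matrix.mul_apply, Fin.sum_univ_two, hC, hRm, Matrix.of_apply,
          Matrix.sub_apply, Matrix.neg_apply, vecMulVec_apply]
        norm_num
        ring
      calc M.rank = (C * Rm).rank := by rw [hfac]
        _ ≤ C.rank := Matrix.rank_mul_le_left C Rm
        _ ≤ Fintype.card (Fin 2) := Matrix.rank_le_card_width C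
        _ = 2 := by simp
    omega
  -- the key bound on the square of the nuclear norm
  have hnn : 0 ≤ ∑ i, Real.sqrt (lam i) :=
    Finset.sum_nonneg fun i _ => Real.sqrt_nonneg _
  have key : (∑ i, Real.sqrt (lam i)) ^ 2 ≤ 4 * (A * Bn) := by
    have hsum1' : ∑ i, lam i = 2 * c ^ 2 + 2 * (A * Bn) := by rw [hsum1, hTr1]
    have hsum2' : ∑ i, (lam i) ^ 2 = 2 * c ^ 4 + 12 * (A * Bn) * c ^ 2 + 2 * (A * Bn) ^ 2 := by
      rw [hsum2, hTr2]
    rw [hTsum]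
    obtain h0 | h1 | h2 : T.card = 0 ∨ T.card = 1 ∨ T.card = 2 := by omega
    · rw [Finset.card_eq_zero.1 h0]
      simp
      positivity
    · obtain ⟨a, ha⟩ := Finset.card_eq_one.1 h1
      rw [ha, Finset.sum_singleton, Real.sq_sqrt (hlam0 a)]
      have : lam a = ∑ i, lam i := by
        rw [← hT1, ha, Finset.sum_singleton]
      rw [this, hsum1']
      nlinarith [hcs]
    · obtain ⟨a, b, hab, hTab⟩ := Finset.card_eq_two.1 h2
      have hsumab : lam a + lam b = 2 * c ^ 2 + 2 * (A * Bn) := by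
        rw [← hsum1', ← hT1, hTab, Finset.sum_pair hab]
      have hsqab : lam a ^ 2 + lam b ^ 2
          = 2 * c ^ 4 + 12 * (A * Bn) * c ^ 2 + 2 * (A * Bn) ^ 2 := by
        rw [← hsum2', ← hT2, hTab, Finset.sum_pair hab]
      have hprod : lam a * lam b = (A * Bn - c ^ 2) ^ 2 := by
        have hid : lam a * lam b
            = ((lam a + lam b) ^ 2 - (lam a ^ 2 + lam b ^ 2)) / 2 := by ring
        rw [hid, hsumab, hsqab]; ring
      rw [hTab, Finset.sum_pair hab]
      have hsqrtprod : Real.sqrt (lam a) * Real.sqrt (lam b) = A * Bn - c ^ 2 := by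
        rw [← Real.sqrt_mul (hlam0 a), hprod, Real.sqrt_sq (by linarith [hcs])]
      have hexp : (Real.sqrt (lam a) + Real.sqrt (lam b)) ^ 2
          = lam a + lam b + 2 * (Real.sqrt (lam a) * Real.sqrt (lam b)) := by
        rw [add_sq, Real.sq_sqrt (hlam0 a), Real.sq_sqrt (hlam0 b)]
        ring
      rw [hexp, hsumab, hsqrtprod]
      ring_nf
      linarith
  -- conclude
  have hfinal : nuclearNorm M ≤ 2 * Real.sqrt A * Real.sqrt Bn := by
    have hnuc : nuclearNorm M = ∑ i, Real.sqrt (lam i) := rfl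
    rw [hnuc]
    have h1 : ∑ i, Real.sqrt (lam i) = Real.sqrt ((∑ i, Real.sqrt (lam i)) ^ 2) :=
      (Real.sqrt_sq hnn).symm
    rw [h1]
    calc Real.sqrt ((∑ i, Real.sqrt (lam i)) ^ 2) ≤ Real.sqrt (4 * (A * Bn)) :=
          Real.sqrt_le_sqrt key
      _ = 2 * Real.sqrt A * Real.sqrt Bn := by
          rw [show 4 * (A * Bn) = (2 * Real.sqrt A * Real.sqrt Bn) ^ 2 by
            rw [mul_pow, mul_pow, Real.sq_sqrt hA0, Real.sq_sqrt hBn0]; ring]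
          exact Real.sqrt_sq (by positivity)
  calc nuclearNorm M ≤ 2 * Real.sqrt A * Real.sqrt Bn := hfinal
    _ ≤ 2 * D * Real.sqrt A := by
        have hsB : Real.sqrt Bn ≤ D := hs
        nlinarith [Real.sqrt_nonneg A, Real.sqrt_nonneg Bn]
    _ = 2 * D * Real.sqrt (∑ i, r i ^ 2) := by rw [← hA]
end

section
/- Let Z = {B ∈ 𝕊^d : ‖B‖_op ≤ L₁}. Suppose G, G̃, S ∈ 𝕊^d, B₀ = W/γ for some γ > 1, G̃ = G + max{0, -⟨G, B₀⟩} S, and ⟨S, W - B⟩ ≥ γ - 1 for all B ∈ Z. Then for every B ∈ Z: ⟨G̃, W - B⟩ ≥ ⟨G, B₀ - B⟩. -/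
open Matrix

/-- Frobenius inner product of two real matrices. -/
def frobInner {d : ℕ} (X Y : Matrix (Fin d) (Fin d) ℝ) : ℝ := ∑ i, ∑ j, X i j * Y i j

/-- `‖M‖_op ≤ c` expressed via the Euclidean norm. -/
def opNormBound {d : ℕ} (M : Matrix (Fin d) (Fin d) ℝ) (c : ℝ) : Prop :=
  ∀ x : Fin d → ℝ, euclNorm (M.mulVec x) ≤ c * euclNorm x

lemma frob_add_left {d : ℕ} (X Y Z : Matrix (Fin d) (Fin d) ℝ) :
    frobInner (X + Y) Z = frobInner X Z + frobInner Y Z := by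
  simp [frobInner, add_mul, Finset.sum_add_distrib]

lemma frob_smul_left {d : ℕ} (c : ℝ) (X Z : Matrix (Fin d) (Fin d) ℝ) :
    frobInner (c • X) Z = c * frobInner X Z := by
  simp [frobInner, Finset.mul_sum, mul_assoc]

lemma frob_sub_right {d : ℕ} (X Y Z : Matrix (Fin d) (Fin d) ℝ) :
    frobInner X (Y - Z) = frobInner X Y - frobInner X Z := by
  simp [frobInner, mul_sub, Finset.sum_sub_distrib]

lemma frob_smul_right {d : ℕ} (c : ℝ) (X Z : Matrix (Fin d) (Fin d) ℝ) :
    frobInner X (c • Z) = c * frobInner X Z := by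
  simp [frobInner, Finset.mul_sum, mul_comm, mul_assoc, mul_left_comm]

/-- The surrogate linear loss dominates the original regret. -/
theorem stmt13 {d : ℕ} (L₁ γ : ℝ) (hγ : 1 < γ)
    (W G S : Matrix (Fin d) (Fin d) ℝ)
    (hsep : ∀ B : Matrix (Fin d) (Fin d) ℝ, Bᵀ = B → opNormBound B L₁ →
      frobInner S (W - B) ≥ γ - 1) :
    ∀ B : Matrix (Fin d) (Fin d) ℝ, Bᵀ = B → opNormBound B L₁ →
      frobInner (G + max 0 (-(frobInner G (γ⁻¹ • W))) • S) (W - B)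
        ≥ frobInner G (γ⁻¹ • W - B) := by
  intro B hB hBop
  have hs := hsep B hB hBop
  set t : ℝ := frobInner G (γ⁻¹ • W) with ht
  set m : ℝ := max 0 (-t) with hm
  have hm0 : 0 ≤ m := le_max_left _ _
  have hmt : -t ≤ m := le_max_right _ _
  have hγ0 : (0:ℝ) < γ := lt_trans one_pos hγ
  have htW : t = γ⁻¹ * frobInner G W := frob_smul_right _ _ _
  rw [frob_add_left, frob_smul_left, frob_sub_right, frob_sub_right, frob_sub_right, ← ht, htW]
  have key : γ * t = frobInner G W := by
    rw [htW]; field_simp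
  have h1 : m * frobInner S (W - B) ≥ m * (γ - 1) :=
    mul_le_mul_of_nonneg_left hs hm0
  nlinarith [mul_le_mul_of_nonneg_left hmt (le_of_lt (sub_pos.mpr hγ)),
    frob_sub_right S W B]
end

section
/- Let A ∈ 𝕊^d with λ_min(A) < 0, let λ̂ ≤ λ_min(A) and v̂ a unit vector with ‖(A - λ̂I)v̂‖ ≤ δ/(2D). Suppose Δ̃ with ‖Δ̃‖ < D satisfies ‖(A - λ̂I)Δ̃ + b‖ ≤ δ/2, and α ∈ ℝ with |α| ≤ D is chosen so that ‖Δ̃ + αv̂‖ = D. Then Δ̂ = Δ̃ + αv̂ satisfies min over v ∈ N_K(Δ̂) of ‖AΔ̂ + b + v‖ ≤ δ, where K is the ball of radius D. -/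
open scoped RealInnerProductSpace

/-- Correctness of the boundary correction in the trust-region solver. -/
theorem stmt16 {d : ℕ} (A : EuclideanSpace ℝ (Fin d) →L[ℝ] EuclideanSpace ℝ (Fin d))
    (hA : ∀ x y : EuclideanSpace ℝ (Fin d), ⟪A x, y⟫ = ⟪x, A y⟫)
    (b : EuclideanSpace ℝ (Fin d)) (D δ lamh : ℝ) (hD : 0 < D) (hδ : 0 < δ)
    (hlamneg : lamh < 0)
    (hmin_neg : ∃ x : EuclideanSpace ℝ (Fin d), ‖x‖ = 1 ∧ ⟪A x, x⟫ < 0)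
    (hlam_le : ∀ x : EuclideanSpace ℝ (Fin d), ⟪A x, x⟫ ≥ lamh * ‖x‖ ^ 2)
    (vh : EuclideanSpace ℝ (Fin d)) (hvh : ‖vh‖ = 1)
    (hvh_approx : ‖A vh - lamh • vh‖ ≤ δ / (2 * D))
    (Δt : EuclideanSpace ℝ (Fin d)) (hΔt : ‖Δt‖ < D)
    (hΔt_approx : ‖(A Δt - lamh • Δt) + b‖ ≤ δ / 2)
    (α : ℝ) (hα : |α| ≤ D) (hbd : ‖Δt + α • vh‖ = D) :
    ∃ v : EuclideanSpace ℝ (Fin d),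
      (∀ u : EuclideanSpace ℝ (Fin d), ‖u‖ ≤ D → ⟪v, u - (Δt + α • vh)⟫ ≤ 0) ∧
      ‖A (Δt + α • vh) + b + v‖ ≤ δ := by
  set Δh := Δt + α • vh with hΔh
  refine ⟨(-lamh) • Δh, ?_, ?_⟩
  · intro u hu
    rw [real_inner_smul_left, inner_sub_right, real_inner_self_eq_norm_sq, hbd]
    have h1 : ⟪Δh, u⟫ ≤ D * D := by
      calc ⟪Δh, u⟫ ≤ ‖Δh‖ * ‖u‖ := real_inner_le_norm _ _
        _ ≤ D * D := by rw [hbd]; exact mul_le_mul_of_nonneg_left hu hD.le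
    nlinarith
  · have key : A Δh + b + (-lamh) • Δh
        = ((A Δt - lamh • Δt) + b) + α • (A vh - lamh • vh) := by
      rw [hΔh, map_add, map_smul]
      module
    rw [key]
    calc ‖((A Δt - lamh • Δt) + b) + α • (A vh - lamh • vh)‖
        ≤ ‖(A Δt - lamh • Δt) + b‖ + ‖α • (A vh - lamh • vh)‖ := norm_add_le _ _
      _ ≤ δ / 2 + |α| * (δ / (2 * D)) := by
          rw [norm_smul, Real.norm_eq_abs]
          exact add_le_add hΔt_approx (mul_le_mul_of_nonneg_left hvh_approx (abs_nonneg _))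
      _ ≤ δ / 2 + D * (δ / (2 * D)) := by
          have : 0 ≤ δ / (2 * D) := by positivity
          exact add_le_add le_rfl (mul_le_mul_of_nonneg_right hα this)
      _ = δ := by field_simp; ring
end
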